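/- There exists a sequence ⟨e_β : β < ω₁⟩ such that each e_β : β → ω is injective and for all β < β' < ω₁ the set {α < β : e_β(α) ≠ e_{β'}(α)} is finite. -/

import Mathlib

open Ordinal Set

namespace CoherentAux

/-- finite disagreement below β -/
def Coh (f g : Ordinal → ℕ) (β : Ordinal) : Prop := {α | α < β ∧ f α ≠ g α}.Finite

def Nice (β : Ordinal) (f : Ordinal → ℕ) : Prop :=
  Set.InjOn f (Set.Iio β) ∧ ((f '' Set.Iio β)ᶜ : Set ℕ).Infinite

lemma coh_refl (f : Ordinal → ℕ) (β : Ordinal) : Coh f f β := by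
  have : {α | α < β ∧ f α ≠ f α} = ∅ := by ext; simp
  rw [Coh, this]; exact Set.finite_empty

lemma coh_symm {f g : Ordinal → ℕ} {β : Ordinal} (h : Coh f g β) : Coh g f β := by
  have : {α | α < β ∧ g α ≠ f α} = {α | α < β ∧ f α ≠ g α} := by
    ext x; simp [ne_comm]
  rw [Coh, this]; exact h

lemma coh_mono {f g : Ordinal → ℕ} {β β' : Ordinal} (h : Coh f g β') (hle : β ≤ β') :
    Coh f g β :=
  h.subset fun x hx => ⟨hx.1.trans_le hle, hx.2⟩

lemma coh_trans {f g h : Ordinal → ℕ} {β β' : Ordinal} (h1 : Coh f g β) (h2 : Coh g h β')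
    (hle : β ≤ β') : Coh f h β := by
  refine ((h1.union h2).subset ?_)
  rintro x ⟨hx, hne⟩
  by_cases hfg : f x = g x
  · exact Or.inr ⟨hx.trans_le hle, fun hgh => hne (hfg.trans hgh)⟩
  · exact Or.inl ⟨hx, hfg⟩

lemma image_subset_of_coh {f g : Ordinal → ℕ} {β : Ordinal} :
    f '' Set.Iio β ⊆ g '' Set.Iio β ∪ f '' {α | α < β ∧ f α ≠ g α} := by
  rintro x ⟨α, hα, rfl⟩
  by_cases h : f α = g α
  · exact Or.inl ⟨α, hα, h.symm⟩
  · exact Or.inr ⟨α, ⟨hα, h⟩, rfl⟩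

/-- choose injective elements of a sequence of infinite subsets of ℕ -/
noncomputable def chooseSeq (T : ℕ → Set ℕ) : ℕ → ℕ
  | k => sInf (T k \ (Set.range fun j : Fin k => chooseSeq T j))
  termination_by k => k
  decreasing_by exact j.2

lemma chooseSeq_spec {T : ℕ → Set ℕ} (hT : ∀ k, (T k).Infinite) (k : ℕ) :
    chooseSeq T k ∈ T k ∧ ∀ j < k, chooseSeq T k ≠ chooseSeq T j := by
  have hne : (T k \ (Set.range fun j : Fin k => chooseSeq T j)).Nonempty := by
    have : ((T k) \ (Set.range fun j : Fin k => chooseSeq T j)).Infinite :=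
      (hT k).diff (Set.finite_range _)
    exact this.nonempty
  have hmem := Nat.sInf_mem hne
  rw [chooseSeq]
  exact ⟨hmem.1, fun j hj heq => hmem.2 ⟨⟨j, hj⟩, heq.symm⟩⟩

lemma chooseSeq_injective {T : ℕ → Set ℕ} (hT : ∀ k, (T k).Infinite) :
    Function.Injective (chooseSeq T) := by
  intro j k hjk
  rcases lt_trichotomy j k with h | h | h
  · exact absurd hjk.symm ((chooseSeq_spec hT k).2 j h)
  · exact h
  · exact absurd hjk ((chooseSeq_spec hT j).2 k h)


lemma exists_injOn_into {B : Set Ordinal} (hB : B.Finite) {P : Set ℕ} (hP : P.Infinite) :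
    ∃ c : Ordinal → ℕ, Set.InjOn c B ∧ ∀ x ∈ B, c x ∈ P := by
  classical
  have hBc : Countable ↑B := hB.countable
  obtain ⟨ι, hι⟩ := exists_injective_nat ↑B
  haveI : Infinite ↑P := hP.to_subtype
  let em := Infinite.natEmbedding ↑P
  refine ⟨fun x => if h : x ∈ B then (em (ι ⟨x, h⟩) : ℕ) else 0, ?_, ?_⟩
  · intro x hx y hy hxy
    simp only [dif_pos hx, dif_pos hy] at hxy
    have h2 := em.injective (Subtype.coe_injective hxy)
    have h3 := hι h2
    exact congrArg Subtype.val h3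
  · intro x hx
    simp only [dif_pos hx]
    exact (em (ι ⟨x, hx⟩)).2

def Avoid (a : ℕ → ℕ) : Set ℕ := a '' {k | Even k}

def Inv (e : Ordinal → Ordinal → ℕ) (b : ℕ → Ordinal) (a : ℕ → ℕ) (n : ℕ)
    (g : Ordinal → ℕ) : Prop :=
  Set.InjOn g (Set.Iio (b n)) ∧ Coh (e (b n)) g (b n) ∧ ∀ α, α < b n → g α ∉ Avoid a

section Step

variable {e : Ordinal → Ordinal → ℕ} {b : ℕ → Ordinal} {a : ℕ → ℕ}

lemma step (hb : StrictMono b)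
    (h1 : ∀ n, Nice (b n) (e (b n)))
    (h2 : ∀ m n, m < n → Coh (e (b m)) (e (b n)) (b m))
    (ha_inj : Function.Injective a)
    (ha : ∀ j k, j ≤ k → a k ∉ e (b j) '' Set.Iio (b j))
    (n : ℕ) (g : Ordinal → ℕ) (hg : Inv e b a n g) :
    ∃ g', Inv e b a (n+1) g' ∧ ∀ α, α < b n → g' α = g α := by
  classical
  set E1 := e (b (n+1)) with hE1def
  have hbn : b n < b (n+1) := hb (Nat.lt_succ_self n)
  have hE1inj : Set.InjOn E1 (Set.Iio (b (n+1))) := (h1 (n+1)).1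
  have hDcoh : Coh E1 g (b n) :=
    coh_trans (coh_symm (h2 n (n+1) (Nat.lt_succ_self n))) hg.2.1 le_rfl
  have hD : {α | α < b n ∧ E1 α ≠ g α}.Finite := hDcoh
  have hD' : {α | α < b n ∧ g α ≠ E1 α}.Finite := coh_symm hDcoh
  set B := {α | b n ≤ α ∧ α < b (n+1) ∧ (E1 α ∈ g '' Set.Iio (b n) ∨ E1 α ∈ Avoid a)}
    with hBdef
  have hidx : ∀ k x, x < b (n+1) → a k = E1 x → k ≤ n := by
    intro k x hx hk
    by_contra h
    exact ha (n+1) k (Nat.succ_le_of_lt (not_le.1 h)) ⟨x, hx, hk.symm⟩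
  have hmemB : ∀ α, α ∈ B ↔
      b n ≤ α ∧ α < b (n+1) ∧ (E1 α ∈ g '' Set.Iio (b n) ∨ E1 α ∈ Avoid a) := by
    intro α; rw [hBdef]; simp only [Set.mem_setOf_eq]
  have hB : B.Finite := by
    have himg : (E1 '' B).Finite := by
      refine Set.Finite.subset ((hD.image g).union ((Set.finite_Iic n).image a)) ?_
      rintro x ⟨α, hα, rfl⟩
      obtain ⟨hα1, hα2, hmem⟩ := (hmemB α).1 hα
      rcases hmem with ⟨α', hα', hval⟩ | ⟨k, hk, hval⟩
      · left
        have hne : E1 α' ≠ g α' := by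
          intro hE
          have hxy : α' = α := hE1inj (lt_trans hα' hbn) hα2 (hE.trans hval)
          exact absurd hα1 (not_le.2 (hxy ▸ hα'))
        exact ⟨α', ⟨hα', hne⟩, hval⟩
      · right; exact ⟨k, hidx k α hα2 hval, hval⟩
    refine Set.Finite.of_finite_image himg (hE1inj.mono ?_)
    intro x hx; exact ((hmemB x).1 hx).2.1
  have hOddsInf : (a '' {k | ¬ Even k}).Infinite := by
    apply Set.infinite_of_injective_forall_mem (f := fun m : ℕ => a (2*m+1))
    · intro i j hij
      have := ha_inj hij; omega
    · intro m
      exact ⟨2*m+1, by simp [Nat.even_iff], rfl⟩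
  set Pool := (a '' {k | ¬ Even k}) \ (g '' Set.Iio (b n) ∪ E1 '' Set.Iio (b (n+1)))
    with hPdef
  have hPool : Pool.Infinite := by
    have hF : ((a '' Set.Iic n) ∪ g '' {α | α < b n ∧ g α ≠ E1 α}).Finite :=
      ((Set.finite_Iic n).image a).union (hD'.image g)
    apply (hOddsInf.diff hF).mono
    rintro x ⟨⟨k, hk, rfl⟩, hxF⟩
    refine ⟨⟨k, hk, rfl⟩, ?_⟩
    rintro (hgim | heim)
    · rcases image_subset_of_coh (f := g) (g := E1) (β := b n) hgim with hei | hdi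
      · obtain ⟨α, hα, hval⟩ := hei
        exact hxF (Or.inl ⟨k, hidx k α (lt_trans hα hbn) hval.symm, rfl⟩)
      · exact hxF (Or.inr hdi)
    · obtain ⟨α, hα, hval⟩ := heim
      exact hxF (Or.inl ⟨k, hidx k α hα hval.symm, rfl⟩)
  have hPoolAvoid : ∀ x ∈ Pool, x ∉ Avoid a := by
    rintro x ⟨⟨k, hk, rfl⟩, -⟩ ⟨k', hk', hval⟩
    exact hk (ha_inj hval ▸ hk')
  obtain ⟨c, hcinj, hcmem⟩ := exists_injOn_into hB hPool
  set g' : Ordinal → ℕ := fun α => if α < b n then g α else if α ∈ B then c α else E1 α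
    with hg'def
  have flow : ∀ α, α < b n → g' α = g α := by
    intro α h; simp only [hg'def]; rw [if_pos h]
  have fB : ∀ α, α ∈ B → g' α = c α := by
    intro α hα
    have h1' : ¬ α < b n := not_lt.2 ((hmemB α).1 hα).1
    simp only [hg'def]; rw [if_neg h1', if_pos hα]
  have fmid : ∀ α, b n ≤ α → α ∉ B → g' α = E1 α := by
    intro α h hB'
    simp only [hg'def]; rw [if_neg (not_lt.2 h), if_neg hB']
  have key : ∀ α, α < b (n+1) →
      (α < b n ∧ g' α ∈ g '' Set.Iio (b n)) ∨
      (α ∈ B ∧ g' α ∈ Pool) ∨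
      (b n ≤ α ∧ α ∉ B ∧ g' α = E1 α ∧ g' α ∈ E1 '' Set.Iio (b (n+1)) ∧
        g' α ∉ g '' Set.Iio (b n) ∧ g' α ∉ Avoid a) := by
    intro α hα
    rcases lt_or_ge α (b n) with h | h
    · exact Or.inl ⟨h, ⟨α, h, (flow α h).symm⟩⟩
    by_cases hB' : α ∈ B
    · exact Or.inr (Or.inl ⟨hB', (fB α hB') ▸ hcmem α hB'⟩)
    · have heq := fmid α h hB'
      refine Or.inr (Or.inr ⟨h, hB', heq, ⟨α, hα, heq.symm⟩, ?_, ?_⟩)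
      · rw [heq]; intro hmem; exact hB' ((hmemB α).2 ⟨h, hα, Or.inl hmem⟩)
      · rw [heq]; intro hmem; exact hB' ((hmemB α).2 ⟨h, hα, Or.inr hmem⟩)
  have hinj : Set.InjOn g' (Set.Iio (b (n+1))) := by
    intro x hx y hy hxy
    rcases key x hx with ⟨hx1, hx2⟩ | ⟨hx1, hx2⟩ | ⟨hx1, hx2, hx3, hx4, hx5, hx6⟩ <;>
      rcases key y hy with ⟨hy1, hy2⟩ | ⟨hy1, hy2⟩ | ⟨hy1, hy2, hy3, hy4, hy5, hy6⟩
    · have hgxy : g x = g y := by rw [← flow x hx1, ← flow y hy1, hxy]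
      exact hg.1 hx1 hy1 hgxy
    · exact absurd (Or.inl (hxy ▸ hx2)) hy2.2
    · exact absurd (hxy ▸ hx2) hy5
    · exact absurd (Or.inl (hxy.symm ▸ hy2)) hx2.2
    · rw [fB x hx1, fB y hy1] at hxy; exact hcinj hx1 hy1 hxy
    · exact absurd (Or.inr (hxy.symm ▸ hy4)) hx2.2
    · exact absurd (hxy.symm ▸ hy2) hx5
    · exact absurd (Or.inr (hxy ▸ hx4)) hy2.2
    · rw [hx3, hy3] at hxy; exact hE1inj hx hy hxy
  have hcoh : Coh E1 g' (b (n+1)) := by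
    apply Set.Finite.subset (hD.union hB)
    rintro α ⟨hα, hne⟩
    rcases lt_or_ge α (b n) with h | h
    · exact Or.inl ⟨h, fun hE => hne (hE.trans (flow α h).symm)⟩
    · right; by_contra hBm; exact hne (fmid α h hBm).symm
  have havd : ∀ α, α < b (n+1) → g' α ∉ Avoid a := by
    intro α hα
    rcases key α hα with ⟨h1', _⟩ | ⟨_, h2'⟩ | ⟨_, _, _, _, _, h6'⟩
    · rw [flow α h1']; exact hg.2.2 α h1'
    · exact hPoolAvoid _ h2'
    · exact h6'
  exact ⟨g', ⟨hinj, hcoh, havd⟩, flow⟩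

end Step

open Classical in
noncomputable def GSeq (e : Ordinal → Ordinal → ℕ) (b : ℕ → Ordinal) (a : ℕ → ℕ) :
    ℕ → Ordinal → ℕ
  | 0 => e (b 0)
  | (n+1) =>
    if h : ∃ g', Inv e b a (n+1) g' ∧ ∀ α, α < b n → g' α = GSeq e b a n α then
      Classical.choose h
    else fun _ => 0

section Limit

variable {e : Ordinal → Ordinal → ℕ} {b : ℕ → Ordinal} {a : ℕ → ℕ}

lemma GSeq_spec (hb : StrictMono b)
    (h1 : ∀ n, Nice (b n) (e (b n)))
    (h2 : ∀ m n, m < n → Coh (e (b m)) (e (b n)) (b m))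
    (ha_inj : Function.Injective a)
    (ha : ∀ j k, j ≤ k → a k ∉ e (b j) '' Set.Iio (b j)) :
    ∀ n, Inv e b a n (GSeq e b a n) ∧
      (∀ m, m < n → ∀ α, α < b m → GSeq e b a n α = GSeq e b a m α) := by
  intro n
  induction n with
  | zero =>
    refine ⟨⟨(h1 0).1, coh_refl _ _, ?_⟩, by omega⟩
    intro α hα ⟨k, _, hval⟩
    exact ha 0 k (Nat.zero_le k) ⟨α, hα, hval.symm⟩
  | succ n ih =>
    have hex : ∃ g', Inv e b a (n+1) g' ∧ ∀ α, α < b n → g' α = GSeq e b a n α :=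
      step hb h1 h2 ha_inj ha n _ ih.1
    classical
    have heq : GSeq e b a (n+1) = Classical.choose hex := by
      rw [GSeq, dif_pos hex]
    have hspec := Classical.choose_spec hex
    rw [← heq] at hspec
    refine ⟨hspec.1, ?_⟩
    intro m hm α hα
    rcases Nat.lt_succ_iff_lt_or_eq.1 hm with h | h
    · have hα' : α < b n := lt_of_lt_of_le hα (hb.monotone (Nat.le_of_lt h))
      rw [hspec.2 α hα', ih.2 m h α hα]
    · subst h; exact hspec.2 α hα

open Classical in
noncomputable def limFun (e : Ordinal → Ordinal → ℕ) (b : ℕ → Ordinal) (a : ℕ → ℕ)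
    (α : Ordinal) : ℕ :=
  if h : ∃ n, α < b n then GSeq e b a (Nat.find h) α else 0

lemma limFun_eq (hb : StrictMono b)
    (h1 : ∀ n, Nice (b n) (e (b n)))
    (h2 : ∀ m n, m < n → Coh (e (b m)) (e (b n)) (b m))
    (ha_inj : Function.Injective a)
    (ha : ∀ j k, j ≤ k → a k ∉ e (b j) '' Set.Iio (b j))
    (n : ℕ) (α : Ordinal) (hα : α < b n) : limFun e b a α = GSeq e b a n α := by
  classical
  have h : ∃ n, α < b n := ⟨n, hα⟩
  rw [limFun, dif_pos h]
  rcases Nat.lt_or_ge (Nat.find h) n with hlt | hge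
  · exact ((GSeq_spec hb h1 h2 ha_inj ha n).2 (Nat.find h) hlt α (Nat.find_spec h)).symm
  · rcases Nat.eq_or_lt_of_le hge with heq | hlt
    · rw [heq]
    · exact (GSeq_spec hb h1 h2 ha_inj ha (Nat.find h)).2 n hlt α hα

lemma limit_good (β : Ordinal) (hb : StrictMono b) (hbβ : ∀ n, b n < β)
    (hcof : ∀ α, α < β → ∃ n, α < b n)
    (h1g : ∀ γ, γ < β → Nice γ (e γ))
    (h2g : ∀ γ γ', γ < γ' → γ' < β → Coh (e γ) (e γ') γ)
    (ha_inj : Function.Injective a)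
    (ha : ∀ j k, j ≤ k → a k ∉ e (b j) '' Set.Iio (b j)) :
    Nice β (limFun e b a) ∧ ∀ γ, γ < β → Coh (e γ) (limFun e b a) γ := by
  have h1 : ∀ n, Nice (b n) (e (b n)) := fun n => h1g (b n) (hbβ n)
  have h2 : ∀ m n, m < n → Coh (e (b m)) (e (b n)) (b m) :=
    fun m n hmn => h2g (b m) (b n) (hb hmn) (hbβ n)
  have hspec := GSeq_spec hb h1 h2 ha_inj ha
  have hle := limFun_eq hb h1 h2 ha_inj ha
  constructor
  · constructor
    · intro x hx y hy hxy
      obtain ⟨nx, hnx⟩ := hcof x hx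
      obtain ⟨ny, hny⟩ := hcof y hy
      have hx' : x < b (max nx ny) := lt_of_lt_of_le hnx (hb.monotone (le_max_left _ _))
      have hy' : y < b (max nx ny) := lt_of_lt_of_le hny (hb.monotone (le_max_right _ _))
      rw [hle _ x hx', hle _ y hy'] at hxy
      exact (hspec (max nx ny)).1.1 hx' hy' hxy
    · apply Set.Infinite.mono (s := Avoid a)
      · rintro t ⟨k, hk, rfl⟩ ⟨α, hα, hval⟩
        obtain ⟨n, hn⟩ := hcof α hα
        rw [hle n α hn] at hval
        exact (hspec n).1.2.2 α hn ⟨k, hk, hval.symm⟩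
      · apply Set.infinite_of_injective_forall_mem (f := fun m : ℕ => a (2*m))
        · intro i j hij
          have := ha_inj hij; omega
        · intro m; exact ⟨2*m, ⟨m, two_mul m⟩, rfl⟩
  · intro γ hγ
    obtain ⟨n, hn⟩ := hcof γ hγ
    have hc1 : Coh (e γ) (e (b n)) γ := h2g γ (b n) hn (hbβ n)
    have hc2 : Coh (e (b n)) (GSeq e b a n) (b n) := (hspec n).1.2.1
    have hc : Coh (e γ) (GSeq e b a n) γ := coh_trans hc1 hc2 (le_of_lt hn)
    apply Set.Finite.subset hc
    rintro α ⟨hα, hne⟩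
    refine ⟨hα, fun hEq => hne ?_⟩
    rw [hle n α (lt_trans hα hn)]
    exact hEq

end Limit

lemma exists_good (e : Ordinal → Ordinal → ℕ) (β : Ordinal) (hβ : β < ω₁)
    (h1g : ∀ γ, γ < β → Nice γ (e γ))
    (h2g : ∀ γ γ', γ < γ' → γ' < β → Coh (e γ) (e γ') γ) :
    ∃ f, Nice β f ∧ ∀ γ, γ < β → Coh (e γ) f γ := by
  classical
  rcases Ordinal.zero_or_succ_or_isSuccLimit β with h0 | ⟨γ, hsucc⟩ | hlim
  · subst h0
    refine ⟨fun _ => 0, ⟨?_, ?_⟩, ?_⟩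
    · intro x hx; exact absurd hx (not_lt_zero (a := x))
    · have hempty : Set.Iio (0:Ordinal) = ∅ := by
        ext x; simp [not_lt_zero]
      rw [hempty, Set.image_empty, Set.compl_empty]; exact Set.infinite_univ
    · intro γ hγ; exact absurd hγ (not_lt_zero (a := γ))
  · subst hsucc
    have hγβ : γ < Order.succ γ := Order.lt_succ γ
    have hNice := h1g γ hγβ
    obtain ⟨m, hm⟩ := hNice.2.nonempty
    set f : Ordinal → ℕ := fun α => if α = γ then m else e γ α with hfdef
    have flt : ∀ α, α < γ → f α = e γ α := by
      intro α h; simp only [hfdef]; rw [if_neg (ne_of_lt h)]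
    have fγ : f γ = m := by simp [hfdef]
    refine ⟨f, ⟨?_, ?_⟩, ?_⟩
    · intro x hx y hy hxy
      rw [Set.mem_Iio, Order.lt_succ_iff] at hx hy
      rcases eq_or_lt_of_le hx with rfl | hx' <;> rcases eq_or_lt_of_le hy with rfl | hy'
      · rfl
      · rw [fγ, flt y hy'] at hxy
        exact absurd ⟨y, hy', hxy.symm⟩ hm
      · rw [fγ, flt x hx'] at hxy
        exact absurd ⟨x, hx', hxy⟩ hm
      · rw [flt x hx', flt y hy'] at hxy
        exact hNice.1 hx' hy' hxy
    · apply Set.Infinite.mono ?_ (hNice.2.diff (Set.finite_singleton m))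
      rintro x ⟨hx1, hx2⟩ ⟨α, hα, hval⟩
      rw [Set.mem_Iio, Order.lt_succ_iff] at hα
      rcases eq_or_lt_of_le hα with rfl | hα'
      · rw [fγ] at hval; exact hx2 hval.symm
      · rw [flt α hα'] at hval; exact hx1 ⟨α, hα', hval⟩
    · intro δ hδ
      rw [Order.lt_succ_iff] at hδ
      have hc : Coh (e δ) (e γ) δ := by
        rcases eq_or_lt_of_le hδ with rfl | h
        · exact coh_refl _ _
        · exact h2g δ γ h hγβ
      apply Set.Finite.subset hc
      rintro α ⟨hα, hne⟩
      refine ⟨hα, fun hEq => hne ?_⟩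
      rw [flt α (lt_of_lt_of_le hα hδ)]
      exact hEq
  · have hcnt : (Set.Iio β).Countable := by
      rw [Cardinal.countable_iff_lt_aleph_one, Ordinal.mk_Iio_ordinal]
      rw [Cardinal.lift_lt_aleph_one, ← Cardinal.lt_ord, Cardinal.ord_aleph]
      exact hβ
    obtain ⟨s, hs⟩ := hcnt.exists_eq_range ⟨0, hlim.pos⟩
    have hsβ : ∀ n, s n < β := by
      intro n
      have : s n ∈ Set.Iio β := by rw [hs]; exact Set.mem_range_self n
      exact this
    have hsurj : ∀ α, α < β → ∃ n, α = s n := by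
      intro α hα
      have : α ∈ Set.range s := by rw [← hs]; exact hα
      obtain ⟨n, hn⟩ := this
      exact ⟨n, hn.symm⟩
    set b : ℕ → Ordinal := fun n =>
      Nat.rec (motive := fun _ => Ordinal) (s 0 + 1) (fun k bk => max bk (s (k+1)) + 1) n
      with hbdef
    have hb0 : b 0 = s 0 + 1 := rfl
    have hbsucc : ∀ n, b (n+1) = max (b n) (s (n+1)) + 1 := fun n => rfl
    have hlt1 : ∀ x : Ordinal, x < x + 1 := by
      intro x; rw [Ordinal.add_one_eq_succ]; exact Order.lt_succ x
    have hb : StrictMono b := by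
      apply strictMono_nat_of_lt_succ
      intro n
      rw [hbsucc n]
      exact lt_of_le_of_lt (le_max_left _ _) (hlt1 _)
    have hsb : ∀ n, s n < b n := by
      intro n
      cases n with
      | zero => rw [hb0]; exact hlt1 _
      | succ k => rw [hbsucc k]; exact lt_of_le_of_lt (le_max_right _ _) (hlt1 _)
    have hsucclt : ∀ x : Ordinal, x < β → x + 1 < β := by
      intro x hx; rw [Ordinal.add_one_eq_succ]; exact hlim.succ_lt hx
    have hbβ : ∀ n, b n < β := by
      intro n
      induction n with
      | zero => rw [hb0]; exact hsucclt _ (hsβ 0)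
      | succ k ih => rw [hbsucc k]; exact hsucclt _ (max_lt ih (hsβ (k+1)))
    have hcof : ∀ α, α < β → ∃ n, α < b n := by
      intro α hα
      obtain ⟨n, rfl⟩ := hsurj α hα
      exact ⟨n, hsb n⟩
    set T : ℕ → Set ℕ := fun k => (⋃ j ∈ Set.Iic k, e (b j) '' Set.Iio (b j))ᶜ with hTdef
    have hT : ∀ k, (T k).Infinite := by
      intro k
      have hfin : (⋃ j ∈ Set.Iio k,
          e (b j) '' {α | α < b j ∧ e (b j) α ≠ e (b k) α}).Finite := by
        apply Set.Finite.biUnion (Set.finite_Iio k)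
        intro j hj
        exact Set.Finite.image _ (h2g (b j) (b k) (hb hj) (hbβ k))
      apply Set.Infinite.mono ?_ ((h1g (b k) (hbβ k)).2.diff hfin)
      rintro x ⟨hx1, hx2⟩
      intro hx
      simp only [Set.mem_iUnion, exists_prop, Set.mem_Iic] at hx
      obtain ⟨j, hj, α, hα, hval⟩ := hx
      rcases eq_or_lt_of_le hj with rfl | hj'
      · exact hx1 ⟨α, hα, hval⟩
      · by_cases heq : e (b j) α = e (b k) α
        · exact hx1 ⟨α, lt_trans hα (hb hj'), heq ▸ hval⟩
        · apply hx2
          simp only [Set.mem_iUnion, exists_prop]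
          exact ⟨j, hj', α, ⟨hα, heq⟩, hval⟩
      -- end
    have ha_inj : Function.Injective (chooseSeq T) := chooseSeq_injective hT
    have ha : ∀ j k, j ≤ k → chooseSeq T k ∉ e (b j) '' Set.Iio (b j) := by
      intro j k hjk hmem
      apply (chooseSeq_spec hT k).1
      simp only [hTdef, Set.mem_iUnion, exists_prop]
      exact ⟨j, hjk, hmem⟩
    obtain ⟨hNice, hCoh⟩ := limit_good β hb hbβ hcof h1g h2g ha_inj ha
    exact ⟨limFun e b (chooseSeq T), hNice, hCoh⟩

lemma Etotal (β : Ordinal) (prev : ∀ γ, γ < β → Ordinal → ℕ) :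
    ∃ f : Ordinal → ℕ,
      (β < ω₁ ∧ (∀ γ (h : γ < β), Nice γ (prev γ h)) ∧
        (∀ γ γ' (h : γ < β) (h' : γ' < β), γ < γ' → Coh (prev γ h) (prev γ' h') γ)) →
      Nice β f ∧ ∀ γ (h : γ < β), Coh (prev γ h) f γ := by
  classical
  by_cases H : β < ω₁ ∧ (∀ γ (h : γ < β), Nice γ (prev γ h)) ∧
      (∀ γ γ' (h : γ < β) (h' : γ' < β), γ < γ' → Coh (prev γ h) (prev γ' h') γ)
  · set e' : Ordinal → Ordinal → ℕ :=
      fun γ => if h : γ < β then prev γ h else fun _ => 0 with he'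
    have he'eq : ∀ γ (h : γ < β), e' γ = prev γ h := by
      intro γ h; simp only [he']; rw [dif_pos h]
    obtain ⟨f, hf1, hf2⟩ := exists_good e' β H.1
      (fun γ h => by rw [he'eq γ h]; exact H.2.1 γ h)
      (fun γ γ' hlt h' => by
        rw [he'eq γ (hlt.trans h'), he'eq γ' h']; exact H.2.2 γ γ' _ _ hlt)
    refine ⟨f, fun _ => ⟨hf1, fun γ h => ?_⟩⟩
    have := hf2 γ h
    rwa [he'eq γ h] at this
  · exact ⟨fun _ => 0, fun h => absurd h H⟩

noncomputable def E : Ordinal → Ordinal → ℕ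
  | β => Classical.choose (Etotal β (fun γ (h : γ < β) => E γ))
  termination_by β => β
  decreasing_by all_goals assumption

lemma E_good : ∀ β, β < ω₁ → Nice β (E β) ∧ ∀ γ, γ < β → Coh (E γ) (E β) γ := by
  intro β
  induction β using Ordinal.induction with
  | _ β IH =>
    intro hβ
    have H : β < ω₁ ∧ (∀ γ (h : γ < β), Nice γ (E γ)) ∧
        (∀ γ γ' (h : γ < β) (h' : γ' < β), γ < γ' → Coh (E γ) (E γ') γ) :=
      ⟨hβ, fun γ h => (IH γ h (h.trans hβ)).1,
        fun γ γ' h h' hlt => (IH γ' h' (h'.trans hβ)).2 γ hlt⟩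
    have hspec := Classical.choose_spec (Etotal β (fun γ (h : γ < β) => E γ)) H
    rw [E]
    exact ⟨hspec.1, fun γ h => hspec.2 γ h⟩

end CoherentAux

/-- There is a coherent sequence of injections `e_β : β → ω` for `β < ω₁`:
each `e_β` is injective on `β`, and any two agree off a finite set. -/
theorem exists_coherent_sequence :
    ∃ e : Ordinal → Ordinal → ℕ,
      (∀ β < ω₁, Set.InjOn (e β) (Set.Iio β)) ∧
      (∀ β β' : Ordinal, β < β' → β' < ω₁ →
        {α : Ordinal | α < β ∧ e β α ≠ e β' α}.Finite) := by
  refine ⟨CoherentAux.E, fun β hβ => (CoherentAux.E_good β hβ).1.1,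
    fun β β' hββ' hβ' => ?_⟩
  exact (CoherentAux.E_good β' hβ').2 β hββ'
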